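/- Let R be a dominant region of the m-Shi arrangement of type A_{n−1} with m-minimal alcove A, and let λ be the n-core with Ψ(λ) = A, where Ψ is the abacus-to-Shi-coordinate bijection. Then H_{θ,m} is a separating wall for R if and only if h_{11}^λ = n(m−1) + 1. -/

import Mathlib

open Finset

namespace Shi

/-- Number of boxes in column `j` (0-indexed) of the partition `lam` with `ℓ` positive parts:
the conjugate partition. -/
def conjP (lam : ℕ → ℕ) (ℓ j : ℕ) : ℕ := ((Finset.range ℓ).filter (fun i => j < lam i)).card

/-- Hook length of the (0-indexed) box `(i, j)` of the partition `lam` having `ℓ` positive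
parts. -/
def hookP (lam : ℕ → ℕ) (ℓ i j : ℕ) : ℤ :=
  (lam i : ℤ) - j + conjP lam ℓ j - i - 1

/-- `lam : ℕ → ℕ` (0-indexed, weakly decreasing, exactly `ℓ` positive parts) is an `n`-core:
no hook length is divisible by `n`. -/
def IsCore (n : ℕ) (lam : ℕ → ℕ) (ℓ : ℕ) : Prop :=
  Antitone lam ∧ (∀ i, 0 < lam i ↔ i < ℓ) ∧
    ∀ i j, i < ℓ → j < lam i → ¬ ((n : ℤ) ∣ hookP lam ℓ i j)

/-- The `k`-th β-number (first column hook length) of `lam`, 0-indexed. -/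
def betaP (lam : ℕ → ℕ) (ℓ k : ℕ) : ℤ := (lam k : ℤ) + ℓ - k - 1

/-- `x` is a bead of the original abacus of `lam`: a negative integer or a β-number. -/
def IsBead (lam : ℕ → ℕ) (ℓ : ℕ) (x : ℤ) : Prop := x < 0 ∨ ∃ k < ℓ, betaP lam ℓ k = x

/-- Inner product of `x` with the positive root `α_{ij} = e_i - e_{j+1}` (0-indexed
`i ≤ j ≤ n-2`). -/
def inn (x : ℕ → ℝ) (i j : ℕ) : ℝ := x i - x (j + 1)

def SumZero (n : ℕ) (x : ℕ → ℝ) : Prop := ∑ i ∈ Finset.range n, x i = 0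

/-- `x` is a point of the type `A_{n-1}` ambient space lying in the open dominant chamber
and on no hyperplane of the `m`-Shi arrangement, hence an interior point of a dominant
`m`-Shi region. -/
def RegionPoint (n m : ℕ) (x : ℕ → ℝ) : Prop :=
  SumZero n x ∧
  (∀ i j, i ≤ j → j + 2 ≤ n → 0 < inn x i j) ∧
  (∀ i j, i ≤ j → j + 2 ≤ n → ∀ t : ℤ, -(m : ℤ) < t → t ≤ m → inn x i j ≠ (t : ℝ))

/-- `e` is the Shi tableau of the dominant `m`-Shi region containing `x`:
`e_{ij} = min(⌊⟨x, α_{ij}⟩⌋, m)`, which is constant on the region and equals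
`min(k_{ij}, m)` for the Shi coordinates `k` of the `m`-minimal alcove of the region. -/
def TabOf (n m : ℕ) (x : ℕ → ℝ) (e : ℕ → ℕ → ℤ) : Prop :=
  ∀ i j, i ≤ j → j + 2 ≤ n → e i j = min ⌊inn x i j⌋ (m : ℤ)

/-- `e` is the Shi tableau of some dominant region of the `m`-Shi arrangement of type
`A_{n-1}`. -/
def IsShiTab (n m : ℕ) (e : ℕ → ℕ → ℤ) : Prop :=
  ∃ x, RegionPoint n m x ∧ TabOf n m x e

/-- `p` lies in the closure of the `m`-Shi region containing `x`. -/
def InClosure (n m : ℕ) (x p : ℕ → ℝ) : Prop :=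
  SumZero n p ∧ ∀ i j, i ≤ j → j + 2 ≤ n → ∀ t : ℤ, -(m : ℤ) < t → t ≤ m →
    (((t : ℝ) < inn x i j → (t : ℝ) ≤ inn p i j) ∧ (inn x i j < t → inn p i j ≤ t))

/-- The hyperplane `H_{α_{uv}, m}` is a separating wall for the dominant `m`-Shi region
containing `x`: the region lies on the far side of the hyperplane from the fundamental
alcove, and the closure of the region contains a point of the hyperplane lying on no other
hyperplane of the arrangement (so the hyperplane supports a facet). -/
def SepWall (n m : ℕ) (x : ℕ → ℝ) (u v : ℕ) : Prop :=
  (m : ℝ) < inn x u v ∧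
  ∃ p, InClosure n m x p ∧ inn p u v = (m : ℝ) ∧
    ∀ i j, i ≤ j → j + 2 ≤ n → ∀ t : ℤ, -(m : ℤ) < t → t ≤ m →
      ¬(i = u ∧ j = v ∧ t = (m : ℤ)) → inn p i j ≠ (t : ℝ)

/-- The combinatorial criterion for `H_{α_{uv}, m}` to be a separating wall. -/
def SepCrit (m : ℕ) (e : ℕ → ℕ → ℤ) (u v : ℕ) : Prop :=
  e u v = (m : ℤ) ∧ ∀ t, u ≤ t → t < v → e u t + e (t + 1) v = (m : ℤ) - 1

/-- The region with Shi tableau `e` has `H_{α_{uv}, m}` as a separating wall. -/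
def SepWallTab (n m : ℕ) (e : ℕ → ℕ → ℤ) (u v : ℕ) : Prop :=
  ∃ x, RegionPoint n m x ∧ TabOf n m x e ∧ SepWall n m x u v

/-- A tableau function normalized to be `0` outside the staircase index domain. -/
def Normalized (n : ℕ) (e : ℕ → ℕ → ℤ) : Prop :=
  ∀ i j, ¬(i ≤ j ∧ j + 2 ≤ n) → e i j = 0

/-- Level numbers of the original abacus of the `n`-core `lam`: `bvec n lam ℓ i` is the
number of β-numbers congruent to `i` mod `n`, i.e. the level of the first gap on runner
`i`. -/
def bvec (n : ℕ) (lam : ℕ → ℕ) (ℓ i : ℕ) : ℕ :=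
  ((Finset.range ℓ).filter (fun k => betaP lam ℓ k % (n : ℤ) = (i : ℤ))).card

/-- The increasing rearrangement `p_1 < ⋯ < p_n` (here 0-indexed) of the numbers
`b_{i-1}·n + i - 1`. -/
def psort (n : ℕ) (lam : ℕ → ℕ) (ℓ : ℕ) : List ℕ :=
  ((Finset.range n).image (fun i => bvec n lam ℓ i * n + i)).sort (· ≤ ·)

/-- Shi coordinates of the alcove `Ψ(lam)`: `k_{ij} = ⌊(p_{j+1} - p_i)/n⌋`, 0-indexed. -/
def kOf (n : ℕ) (lam : ℕ → ℕ) (ℓ : ℕ) (i j : ℕ) : ℤ :=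
  (((psort n lam ℓ).getD (j + 1) 0 : ℤ) - ((psort n lam ℓ).getD i 0 : ℤ)) / (n : ℤ)

/-- Shi's condition for a family of integers to be the coordinates of an alcove. -/
def IsAlcoveCoords (n : ℕ) (k : ℕ → ℕ → ℤ) : Prop :=
  ∀ i t j, i ≤ t → t < j → j + 2 ≤ n →
    k i t + k (t + 1) j ≤ k i j ∧ k i j ≤ k i t + k (t + 1) j + 1

/-- Coordinates of a dominant alcove. -/
def DomAlcoveCoords (n : ℕ) (k : ℕ → ℕ → ℤ) : Prop :=
  (∀ i j, i ≤ j → j + 2 ≤ n → 0 ≤ k i j) ∧ IsAlcoveCoords n k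

/-- `k` is the family of Shi coordinates of the `m`-minimal alcove of the dominant `m`-Shi
region with Shi tableau `e`: it is a dominant alcove of the region, coordinatewise minimal
among alcoves of the region. -/
def MinAlcRel (n m : ℕ) (e k : ℕ → ℕ → ℤ) : Prop :=
  DomAlcoveCoords n k ∧ (∀ i j, i ≤ j → j + 2 ≤ n → min (k i j) (m : ℤ) = e i j) ∧
  ∀ k', DomAlcoveCoords n k' →
    (∀ i j, i ≤ j → j + 2 ≤ n → min (k' i j) (m : ℤ) = e i j) →
    ∀ i j, i ≤ j → j + 2 ≤ n → k i j ≤ k' i j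


/-! ### Part 1: analytic characterization -/

/-- Dichotomy for the Shi tableau entry of a region point. -/
lemma tab_window (n m : ℕ) (hm : 1 ≤ m) (x : ℕ → ℝ) (e : ℕ → ℕ → ℤ)
    (hx : RegionPoint n m x) (he : TabOf n m x e) (i j : ℕ) (hij : i ≤ j) (hjn : j + 2 ≤ n) :
    (e i j = m ∧ (m : ℝ) < inn x i j) ∨
    (0 ≤ e i j ∧ e i j < m ∧ ((e i j : ℝ) < inn x i j ∧ inn x i j < e i j + 1)) := by
  have hpos := hx.2.1 i j hij hjn
  have havoid := hx.2.2 i j hij hjn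
  have heq := he i j hij hjn
  have hF0 : (0:ℤ) ≤ ⌊inn x i j⌋ := Int.le_floor.mpr (by exact_mod_cast hpos.le)
  rcases le_or_gt (m : ℤ) ⌊inn x i j⌋ with hc | hc
  · left
    constructor
    · rw [heq]; omega
    · have h1 : (m : ℝ) ≤ inn x i j := by
        have := Int.le_floor.mp hc
        exact_mod_cast this
      have h2 : inn x i j ≠ (m : ℝ) := by
        have := havoid (m : ℤ) (by exact_mod_cast by omega : -(m:ℤ) < m) le_rfl
        exact_mod_cast this
      push_cast at h2 ⊢
      exact lt_of_le_of_ne h1 (Ne.symm h2)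
  · right
    have heF : e i j = ⌊inn x i j⌋ := by rw [heq]; omega
    refine ⟨by omega, by omega, ?_, ?_⟩
    · have h1 : ((⌊inn x i j⌋ : ℝ)) ≤ inn x i j := Int.floor_le _
      have h2 : inn x i j ≠ ((⌊inn x i j⌋ : ℝ)) := by
        exact_mod_cast havoid ⌊inn x i j⌋ (by omega) (by omega)
      rw [heF]; exact lt_of_le_of_ne h1 (Ne.symm h2)
    · have := Int.lt_floor_add_one (inn x i j)
      rw [heF]; push_cast; push_cast at this; linarith

lemma inn_split (x : ℕ → ℝ) (i t j : ℕ) : inn x i j = inn x i t + inn x (t+1) j := by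
  unfold inn; ring

/-- closure+genericity forces the same window for `p`. -/
lemma sep_to_crit (n m : ℕ) (hn : 2 ≤ n) (hm : 1 ≤ m) (x : ℕ → ℝ) (e : ℕ → ℕ → ℤ)
    (hx : RegionPoint n m x) (he : TabOf n m x e)
    (h : SepWall n m x 0 (n-2)) : SepCrit m e 0 (n-2) := by
  have hdom : (n-2) + 2 ≤ n := by omega
  obtain ⟨hgt, p, ⟨hps, hpcl⟩, hpeq, hpav⟩ := h
  constructor
  · have := he 0 (n-2) (Nat.zero_le _) hdom
    rw [this]
    have : (m:ℤ) ≤ ⌊inn x 0 (n-2)⌋ := Int.le_floor.mpr (by exact_mod_cast hgt.le)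
    omega
  · intro t ht0 htv
    -- windows for the two subpairs
    have hd1 : t + 2 ≤ n := by omega
    have hd2 : t + 1 ≤ n - 2 := by omega
    -- generic helper: for a non-wall pair with e < m, p is in the open window
    have key : ∀ i j, i ≤ j → j + 2 ≤ n → ¬(i = 0 ∧ j = n-2) →
        ((e i j < m → ((e i j : ℝ) < inn p i j ∧ inn p i j < e i j + 1)) ∧
          (e i j = m → (m:ℝ) < inn p i j)) := by
      intro i j hij hjn hnw
      have hw := tab_window n m hm x e hx he i j hij hjn
      have hcl := hpcl i j hij hjn
      have hav : ∀ t' : ℤ, -(m:ℤ) < t' → t' ≤ m → inn p i j ≠ (t':ℝ) := by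
        intro t' h1 h2
        exact hpav i j hij hjn t' h1 h2 (by tauto)
      constructor
      · intro helt
        rcases hw with ⟨h1, _⟩ | ⟨h0, hlt, hxl, hxu⟩
        · omega
        constructor
        · have h1 := (hcl (e i j) (by omega) (by omega)).1 hxl
          have h2 := hav (e i j) (by omega) (by omega)
          exact lt_of_le_of_ne h1 (Ne.symm h2)
        · have h1 := (hcl (e i j + 1) (by omega) (by omega)).2 (by push_cast; push_cast at hxu; linarith)
          have h2 := hav (e i j + 1) (by omega) (by omega)
          push_cast at h1 h2 ⊢
          exact lt_of_le_of_ne h1 h2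
      · intro hem
        rcases hw with ⟨_, hgt'⟩ | ⟨_, hlt, _⟩
        · have h1 := (hcl (m:ℤ) (by omega) (by omega)).1 (by exact_mod_cast hgt')
          have h2 := hav (m:ℤ) (by omega) (by omega)
          push_cast at h1 h2 ⊢
          exact lt_of_le_of_ne h1 (Ne.symm h2)
        · omega
    have k1 := key 0 t (Nat.zero_le _) hd1 (by omega)
    have k2 := key (t+1) (n-2) hd2 hdom (by omega)
    have he1 := tab_window n m hm x e hx he 0 t (Nat.zero_le _) hd1
    have he2 := tab_window n m hm x e hx he (t+1) (n-2) hd2 hdom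
    have hsplit : inn p 0 (n-2) = inn p 0 t + inn p (t+1) (n-2) := inn_split p 0 t (n-2)
    have he1n : 0 ≤ e 0 t := by rcases he1 with ⟨h,_⟩|⟨h,_⟩ <;> omega
    have he2n : 0 ≤ e (t+1) (n-2) := by rcases he2 with ⟨h,_⟩|⟨h,_⟩ <;> omega
    have he1m : e 0 t ≤ m := by
      have := he 0 t (Nat.zero_le _) hd1; rw [this]; omega
    have he2m : e (t+1) (n-2) ≤ m := by
      have := he (t+1) (n-2) hd2 hdom; rw [this]; omega
    -- rule out e = m for each subpair
    have hne1 : e 0 t < m := by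
      by_contra hc
      have hem : e 0 t = m := by omega
      have h1 : (m:ℝ) < inn p 0 t := k1.2 hem
      have h2 : (0:ℝ) < inn p (t+1) (n-2) := by
        rcases lt_or_ge (e (t+1) (n-2)) (m:ℤ) with hc2 | hc2
        · have := (k2.1 hc2).1
          have : (0:ℝ) ≤ ((e (t+1) (n-2) : ℤ):ℝ) := by exact_mod_cast he2n
          linarith [(k2.1 hc2).1]
        · have := k2.2 (by omega)
          have hm' : (0:ℝ) < (m:ℝ) := by exact_mod_cast hm
          linarith
      rw [hpeq] at hsplit
      have : (m:ℝ) < (m:ℝ) := by linarith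
      exact lt_irrefl _ this
    have hne2 : e (t+1) (n-2) < m := by
      by_contra hc
      have hem : e (t+1) (n-2) = m := by omega
      have h1 : (m:ℝ) < inn p (t+1) (n-2) := k2.2 hem
      have h2 : (0:ℝ) < inn p 0 t := by
        have := (k1.1 hne1).1
        have h0 : (0:ℝ) ≤ ((e 0 t : ℤ):ℝ) := by exact_mod_cast he1n
        linarith
      rw [hpeq] at hsplit
      have : (m:ℝ) < (m:ℝ) := by linarith
      exact lt_irrefl _ this
    obtain ⟨w1l, w1u⟩ := k1.1 hne1
    obtain ⟨w2l, w2u⟩ := k2.1 hne2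
    rw [hpeq] at hsplit
    have hlow : ((e 0 t + e (t+1) (n-2) : ℤ):ℝ) < (m:ℝ) := by push_cast; push_cast at w1l w2l; linarith
    have hhigh : (m:ℝ) < ((e 0 t + e (t+1) (n-2) : ℤ):ℝ) + 2 := by push_cast; push_cast at w1u w2u; linarith
    have l1 : e 0 t + e (t+1) (n-2) < (m:ℤ) := by exact_mod_cast hlow
    have l2 : (m:ℤ) < e 0 t + e (t+1) (n-2) + 2 := by exact_mod_cast hhigh
    omega

lemma int_window {E t : ℤ} {q : ℝ} (h1 : (E:ℝ) < q) (h2 : q < (E:ℝ) + 1) : q ≠ (t:ℝ) := by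
  rcases le_or_gt t E with h | h
  · intro hc; rw [hc] at h1; exact absurd h1 (by push_cast; exact_mod_cast (by exact_mod_cast h : (t:ℝ) ≤ (E:ℝ)).not_gt)
  · have : (E:ℝ) + 1 ≤ (t:ℝ) := by exact_mod_cast h
    intro hc; rw [hc] at h2; linarith

lemma crit_to_sep (n m : ℕ) (hn : 2 ≤ n) (hm : 1 ≤ m) (x : ℕ → ℝ) (e : ℕ → ℕ → ℤ)
    (hx : RegionPoint n m x) (he : TabOf n m x e)
    (h : SepCrit m e 0 (n-2)) : SepWall n m x 0 (n-2) := by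
  have hdom : (n-2) + 2 ≤ n := by omega
  obtain ⟨hem, hsum⟩ := h
  -- the region lies beyond the wall
  have hw := tab_window n m hm x e hx he 0 (n-2) (Nat.zero_le _) hdom
  have hgt : (m:ℝ) < inn x 0 (n-2) := by
    rcases hw with ⟨_, h1⟩ | ⟨_, h1, _⟩
    · exact h1
    · omega
  -- windows for subpairs
  have hsub : ∀ t, t < n-2 → (0 ≤ e 0 t ∧ e 0 t < m ∧
      ((e 0 t : ℝ) < inn x 0 t ∧ inn x 0 t < e 0 t + 1)) ∧
      (0 ≤ e (t+1) (n-2) ∧ e (t+1) (n-2) < m ∧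
      ((e (t+1) (n-2) : ℝ) < inn x (t+1) (n-2) ∧ inn x (t+1) (n-2) < e (t+1) (n-2) + 1)) := by
    intro t ht
    have hs := hsum t (Nat.zero_le _) ht
    have h1 := tab_window n m hm x e hx he 0 t (Nat.zero_le _) (by omega)
    have h2 := tab_window n m hm x e hx he (t+1) (n-2) (by omega) hdom
    have hn1 : 0 ≤ e 0 t := by rcases h1 with ⟨a,_⟩|⟨a,_⟩ <;> omega
    have hn2 : 0 ≤ e (t+1) (n-2) := by rcases h2 with ⟨a,_⟩|⟨a,_⟩ <;> omega
    constructor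
    · rcases h1 with ⟨a,_⟩|⟨a,b,c⟩
      · omega
      · exact ⟨a, b, c⟩
    · rcases h2 with ⟨a,_⟩|⟨a,b,c⟩
      · omega
      · exact ⟨a, b, c⟩
  set s : ℝ := (inn x 0 (n-2) - m) / 2 with hs_def
  have hs_pos : 0 < s := by rw [hs_def]; linarith
  -- s is small compared to all windows
  have hs_small : ∀ t, t < n-2 →
      2 * s < inn x 0 t - e 0 t ∧ 2 * s < inn x (t+1) (n-2) - e (t+1) (n-2) := by
    intro t ht
    obtain ⟨⟨_, _, w1l, w1u⟩, ⟨_, _, w2l, w2u⟩⟩ := hsub t ht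
    have hsplit : inn x 0 (n-2) = inn x 0 t + inn x (t+1) (n-2) := inn_split x 0 t (n-2)
    have hs' := hsum t (Nat.zero_le _) ht
    have hcast : ((e 0 t : ℝ)) + ((e (t+1) (n-2) : ℝ)) = (m:ℝ) - 1 := by
      exact_mod_cast congrArg (fun z : ℤ => (z:ℝ)) hs'
    constructor
    · rw [hs_def]; push_cast at w2u ⊢; linarith
    · rw [hs_def]; push_cast at w1u ⊢; linarith
  set p : ℕ → ℝ := fun i => x i + (if i = n-1 then s else 0) - (if i = 0 then s else 0) with hp_def
  have hinnp : ∀ i j, i ≤ j → j + 2 ≤ n →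
      inn p i j = inn x i j - (if i = 0 then s else 0) - (if j = n-2 then s else 0) := by
    intro i j hij hjn
    have hi : i ≠ n-1 := by omega
    have hj : j + 1 ≠ 0 := by omega
    have hj2 : (if j + 1 = n-1 then s else 0) = (if j = n-2 then s else 0) := by
      rcases Nat.decEq j (n-2) with hc | hc
      · rw [if_neg (by omega), if_neg hc]
      · rw [if_pos (by omega), if_pos hc]
    simp only [inn, hp_def]
    rw [if_neg hi, if_neg hj, hj2]
    ring
  refine ⟨hgt, p, ⟨?_, ?_⟩, ?_, ?_⟩
  · -- SumZero
    have h0 : (0:ℕ) ∈ Finset.range n := by simp; omega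
    have h1 : (n-1) ∈ Finset.range n := by simp; omega
    simp only [SumZero, hp_def]
    rw [Finset.sum_sub_distrib, Finset.sum_add_distrib]
    rw [Finset.sum_ite_eq' (Finset.range n) (n-1) (fun _ => s),
        Finset.sum_ite_eq' (Finset.range n) 0 (fun _ => s)]
    simp [h0, h1]
    exact hx.1
  · -- InClosure
    intro i j hij hjn t ht1 ht2
    rw [hinnp i j hij hjn]
    by_cases hc1 : i = 0 <;> by_cases hc2 : j = n-2
    · -- the wall pair
      subst hc1; subst hc2
      rw [if_pos rfl, if_pos rfl]
      have hzz : inn x 0 (n-2) - s - s = (m:ℝ) := by rw [hs_def]; ring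
      rw [hzz]
      constructor
      · intro h'; exact_mod_cast ht2
      · intro h'; exfalso
        have : (t:ℝ) ≤ (m:ℝ) := by exact_mod_cast ht2
        linarith
    · -- i = 0, j < n-2
      subst hc1
      have hj : j < n - 2 := by omega
      obtain ⟨⟨_, hEm, wl, wu⟩, _⟩ := hsub j hj
      obtain ⟨hsm, _⟩ := hs_small j hj
      rw [if_pos rfl, if_neg hc2]
      have hql : (e 0 j : ℝ) < inn x 0 j - s - 0 := by linarith
      have hqu : inn x 0 j - s - 0 < (e 0 j : ℝ) + 1 := by linarith
      constructor
      · intro h'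
        have : (t:ℝ) ≤ (e 0 j : ℝ) := by
          by_contra hc
          push_neg at hc
          have : ((e 0 j) + 1 : ℝ) ≤ (t:ℝ) := by exact_mod_cast (by exact_mod_cast hc : e 0 j < t)
          linarith
        linarith
      · intro h'
        have : ((e 0 j) + 1 : ℝ) ≤ (t:ℝ) := by
          have : (e 0 j : ℝ) < (t:ℝ) := by linarith
          exact_mod_cast (by exact_mod_cast this : e 0 j < t)
        linarith
    · -- i ≥ 1, j = n-2
      subst hc2
      have hi1 : 1 ≤ i := by omega
      have hj : i - 1 < n - 2 := by omega
      have hti : i - 1 + 1 = i := by omega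
      obtain ⟨_, h2⟩ := hsub (i-1) hj
      rw [hti] at h2
      obtain ⟨_, hEm, wl, wu⟩ := h2
      obtain ⟨_, hsm⟩ := hs_small (i-1) hj
      rw [hti] at hsm
      rw [if_neg hc1, if_pos rfl]
      have hql : (e i (n-2) : ℝ) < inn x i (n-2) - 0 - s := by linarith
      have hqu : inn x i (n-2) - 0 - s < (e i (n-2) : ℝ) + 1 := by linarith
      constructor
      · intro h'
        have : (t:ℝ) ≤ (e i (n-2) : ℝ) := by
          by_contra hc
          push_neg at hc
          have : ((e i (n-2)) + 1 : ℝ) ≤ (t:ℝ) := by exact_mod_cast (by exact_mod_cast hc : e i (n-2) < t)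
          linarith
        linarith
      · intro h'
        have : ((e i (n-2)) + 1 : ℝ) ≤ (t:ℝ) := by
          have : (e i (n-2) : ℝ) < (t:ℝ) := by linarith
          exact_mod_cast (by exact_mod_cast this : e i (n-2) < t)
        linarith
    · -- untouched pair
      simp only [if_neg hc1, if_neg hc2]
      constructor
      · intro h'; linarith
      · intro h'; linarith
  · -- on the wall
    rw [hinnp 0 (n-2) (Nat.zero_le _) hdom, if_pos rfl, if_pos rfl]
    rw [hs_def]; ring
  · -- genericity off the wall
    intro i j hij hjn t ht1 ht2 hnw
    rw [hinnp i j hij hjn]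
    by_cases hc1 : i = 0 <;> by_cases hc2 : j = n-2
    · subst hc1; subst hc2
      rw [if_pos rfl, if_pos rfl]
      have hval : inn x 0 (n-2) - s - s = (m:ℝ) := by rw [hs_def]; ring
      rw [hval]
      have htm : t ≠ (m:ℤ) := by tauto
      intro hc
      exact htm (by exact_mod_cast hc.symm)
    · subst hc1
      have hj : j < n - 2 := by omega
      obtain ⟨⟨_, hEm, wl, wu⟩, _⟩ := hsub j hj
      obtain ⟨hsm, _⟩ := hs_small j hj
      rw [if_pos rfl, if_neg hc2]
      exact int_window (E := e 0 j) (by linarith) (by linarith)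
    · subst hc2
      have hi1 : 1 ≤ i := by omega
      have hj : i - 1 < n - 2 := by omega
      have hti : i - 1 + 1 = i := by omega
      obtain ⟨_, h2⟩ := hsub (i-1) hj
      rw [hti] at h2
      obtain ⟨_, hEm, wl, wu⟩ := h2
      obtain ⟨_, hsm⟩ := hs_small (i-1) hj
      rw [hti] at hsm
      rw [if_neg hc1, if_pos rfl]
      exact int_window (E := e i (n-2)) (by linarith) (by linarith)
    · simp only [if_neg hc1, if_neg hc2]
      have := hx.2.2 i j hij hjn t ht1 ht2
      simpa using this

/-! ### Part 2: abacus combinatorics -/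

section Abacus

variable {n : ℕ} {lam : ℕ → ℕ} {ℓ : ℕ}

/-- A bead value: some β-number equals `v`. -/
def Bead (lam : ℕ → ℕ) (ℓ : ℕ) (v : ℤ) : Prop := ∃ k < ℓ, betaP lam ℓ k = v

lemma beta_strictAnti (hA : Antitone lam) : StrictAnti (betaP lam ℓ) := by
  intro a b hab
  have := hA hab.le
  simp only [betaP]
  omega

lemma beta_pos (hpos : ∀ i, 0 < lam i ↔ i < ℓ) {k : ℕ} (hk : k < ℓ) :
    1 ≤ betaP lam ℓ k := by
  have h1 : 0 < lam k := (hpos k).mpr hk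
  simp only [betaP]; omega

lemma beta_le_beta0 (hA : Antitone lam) (k : ℕ) : betaP lam ℓ k ≤ betaP lam ℓ 0 :=
  (beta_strictAnti hA).antitone (Nat.zero_le k)

/-- A downward-closed finset of naturals is an initial segment. -/
lemma downclosed_eq_range (S : Finset ℕ) (h : ∀ a b : ℕ, a ≤ b → b ∈ S → a ∈ S) :
    S = Finset.range S.card := by
  ext i
  simp only [Finset.mem_range]
  constructor
  · intro hi
    by_contra hc
    push_neg at hc
    have hsub : Finset.range (i+1) ⊆ S := by
      intro a ha
      simp only [Finset.mem_range] at ha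
      exact h a i (by omega) hi
    have := Finset.card_le_card hsub
    simp at this
    omega
  · intro hi
    by_contra hc
    have hsub : S ⊆ Finset.range i := by
      intro b hb
      simp only [Finset.mem_range]
      by_contra hb2
      exact hc (h i b (by omega) hb)
    have := Finset.card_le_card hsub
    simp at this
    omega

/-- Hook lengths of row `k` are the `β_k - y` for non-beads `0 ≤ y < β_k`. -/
lemma hook_of_nonbead (hA : Antitone lam) (hpos : ∀ i, 0 < lam i ↔ i < ℓ)
    {k : ℕ} (hk : k < ℓ) {y : ℤ} (hy0 : 0 ≤ y) (hyk : y < betaP lam ℓ k)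
    (hnb : ¬ Bead lam ℓ y) :
    ∃ j < lam k, hookP lam ℓ k j = betaP lam ℓ k - y := by
  classical
  set T : Finset ℕ := (Finset.range ℓ).filter (fun i => y < betaP lam ℓ i) with hT
  set c : ℕ := T.card with hc
  have hbne : ∀ i, i < ℓ → betaP lam ℓ i ≠ y := by
    intro i hi hEq; exact hnb ⟨i, hi, hEq⟩
  have hTdc : ∀ a b : ℕ, a ≤ b → b ∈ T → a ∈ T := by
    intro a b hab hb
    simp only [hT, Finset.mem_filter, Finset.mem_range] at hb ⊢
    exact ⟨by omega, lt_of_lt_of_le hb.2 ((beta_strictAnti hA).antitone hab)⟩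
  have hTr : T = Finset.range c := downclosed_eq_range T hTdc
  have hmemT : ∀ i, i ∈ T ↔ i < c := by intro i; rw [hTr]; simp
  have hkc : k < c := (hmemT k).mp (by
    simp only [hT, Finset.mem_filter, Finset.mem_range]; exact ⟨hk, hyk⟩)
  have hcl : c ≤ ℓ := by
    rw [hc, hT]
    calc ((Finset.range ℓ).filter _).card ≤ (Finset.range ℓ).card := Finset.card_filter_le _ _
    _ = ℓ := Finset.card_range ℓ
  have hbc1 : y < betaP lam ℓ (c-1) := by
    have h1 : (c-1) ∈ T := (hmemT _).mpr (by omega)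
    simp only [hT, Finset.mem_filter] at h1
    exact h1.2
  have hbc : ∀ i, c ≤ i → i < ℓ → betaP lam ℓ i < y := by
    intro i hci hil
    have h1 : i ∉ T := by rw [hmemT]; omega
    simp only [hT, Finset.mem_filter, Finset.mem_range] at h1
    push_neg at h1
    have h2 := h1 hil
    have h3 := hbne i hil
    omega
  -- ℓ - c ≤ y
  have hlc : (ℓ:ℤ) - c ≤ y := by
    set U : Finset ℕ := (Finset.range ℓ).filter (fun i => ¬ y < betaP lam ℓ i) with hU
    have hUcard : c + U.card = ℓ := by
      rw [hc, hT, hU, Finset.card_filter_add_card_filter_not, Finset.card_range]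
    have hinj : Set.InjOn (fun i => (betaP lam ℓ i).toNat) U := by
      intro a ha b hb hab
      simp only [Finset.mem_coe, hU, Finset.mem_filter, Finset.mem_range] at ha hb
      have ha2 := beta_pos hpos ha.1
      have hb2 := beta_pos hpos hb.1
      have hab' : (betaP lam ℓ a).toNat = (betaP lam ℓ b).toNat := hab
      have : betaP lam ℓ a = betaP lam ℓ b := by omega
      exact (beta_strictAnti hA).injective this
    have hsub : U.image (fun i => (betaP lam ℓ i).toNat) ⊆ Finset.range y.toNat := by
      intro v hv
      simp only [Finset.mem_image] at hv
      obtain ⟨i, hi, hiv⟩ := hv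
      simp only [hU, Finset.mem_filter, Finset.mem_range] at hi
      simp only [Finset.mem_range]
      have h1 := beta_pos hpos hi.1
      have h2 := hbne i hi.1
      omega
    have hcard := Finset.card_le_card hsub
    rw [Finset.card_image_of_injOn hinj, Finset.card_range] at hcard
    omega
  set j : ℕ := y.toNat - (ℓ - c) with hj
  have hjz : (j:ℤ) = y - ((ℓ:ℤ) - c) := by omega
  have hlamc1 : (j:ℤ) < lam (c-1) := by
    have h2 : betaP lam ℓ (c-1) = (lam (c-1) : ℤ) + ℓ - ((c:ℤ)-1) - 1 := by
      simp only [betaP]; omega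
    omega
  have hconj : conjP lam ℓ j = c := by
    unfold conjP
    have heq : (Finset.range ℓ).filter (fun i => j < lam i) = T := by
      rw [hTr]
      ext i
      simp only [Finset.mem_filter, Finset.mem_range]
      constructor
      · rintro ⟨hil, hji⟩
        by_contra hic
        push_neg at hic
        have h1 : lam i ≤ lam c := by
          rcases Nat.eq_or_lt_of_le hic with h | h
          · rw [h]
          · exact hA (le_of_lt h)
        have h2 := hbc c le_rfl (by omega)
        simp only [betaP] at h2
        omega
      · intro hic
        have h1 : lam (c-1) ≤ lam i := hA (by omega)
        constructor
        · omega
        · omega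
    rw [heq, ← hc]
  have hjlam : j < lam k := by
    have h1 : lam (c-1) ≤ lam k := hA (by omega)
    omega
  refine ⟨j, hjlam, ?_⟩
  simp only [hookP, hconj, betaP]
  omega

lemma bead_step (hcore : IsCore n lam ℓ) {v : ℤ} (hb : Bead lam ℓ v) (hv : (n:ℤ) ≤ v) :
    Bead lam ℓ (v - n) := by
  obtain ⟨hA, hpos, hhook⟩ := hcore
  by_contra hnb
  obtain ⟨k, hk, hkv⟩ := hb
  have h1 : (0:ℤ) ≤ v - n := by omega
  rcases Nat.eq_zero_or_pos n with hn0 | hn0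
  · subst hn0
    exact hnb (by rw [Nat.cast_zero, sub_zero]; exact ⟨k, hk, hkv⟩)
  have h2 : v - n < betaP lam ℓ k := by
    have : (0:ℤ) < n := by exact_mod_cast hn0
    omega
  obtain ⟨j, hj, hjh⟩ := hook_of_nonbead hA hpos hk h1 h2 hnb
  rw [hkv] at hjh
  have : (n:ℤ) ∣ hookP lam ℓ k j := by rw [hjh]; simp
  exact hhook k j hk hj this

lemma bead_chain (hcore : IsCore n lam ℓ) (hn : 0 < n) {r : ℕ} {a b : ℕ} (hab : a ≤ b)
    (hb : Bead lam ℓ ((b:ℤ) * n + r)) : Bead lam ℓ ((a:ℤ) * n + r) := by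
  obtain ⟨d, rfl⟩ : ∃ d, b = a + d := ⟨b - a, by omega⟩
  clear hab
  induction d with
  | zero => simpa using hb
  | succ d ih =>
    apply ih
    have hnz : (0:ℤ) < (n:ℤ) := by exact_mod_cast hn
    have hb' := bead_step hcore hb (by push_cast; nlinarith [Int.ofNat_nonneg r, Int.ofNat_nonneg a, Int.ofNat_nonneg d])
    convert hb' using 1
    push_cast
    ring

/-- Flushness: beads on runner `r` are exactly levels `< bvec n lam ℓ r`. -/
lemma flush (hcore : IsCore n lam ℓ) (hn : 0 < n) {r : ℕ} (hr : r < n) (s : ℕ) :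
    Bead lam ℓ ((s:ℤ) * n + r) ↔ s < bvec n lam ℓ r := by
  classical
  have hA := hcore.1
  have hpos := hcore.2.1
  set T : Finset ℕ := (Finset.range ℓ).filter (fun k => betaP lam ℓ k % (n : ℤ) = (r : ℤ)) with hT
  have hbv : bvec n lam ℓ r = T.card := rfl
  set g : ℕ → ℕ := fun k => ((betaP lam ℓ k) / n).toNat with hg
  have hgood : ∀ k ∈ T, ((g k : ℤ)) * n + r = betaP lam ℓ k := by
    intro k hk
    simp only [hT, Finset.mem_filter, Finset.mem_range] at hk
    have h1 : (n:ℤ) * (betaP lam ℓ k / n) + betaP lam ℓ k % n = betaP lam ℓ k :=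
      Int.mul_ediv_add_emod _ _
    have h2 : 0 ≤ betaP lam ℓ k / n :=
      Int.ediv_nonneg (by have := beta_pos hpos hk.1; omega) (by positivity)
    have h3 : ((g k : ℤ)) = betaP lam ℓ k / n := by simp only [hg]; omega
    rw [h3]
    rw [hk.2] at h1
    linarith [h1]
  set Sset : Finset ℕ := T.image g with hS
  have hinj : Set.InjOn g T := by
    intro a ha b hb hab
    have h1 := hgood a ha
    have h2 := hgood b hb
    rw [hab] at h1
    have : betaP lam ℓ a = betaP lam ℓ b := by omega
    exact (beta_strictAnti hA).injective this
  have hcard : Sset.card = bvec n lam ℓ r := by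
    rw [hS, Finset.card_image_of_injOn hinj, hbv]
  have hmem : ∀ s : ℕ, s ∈ Sset ↔ Bead lam ℓ ((s:ℤ) * n + r) := by
    intro s
    constructor
    · intro hs
      simp only [hS, Finset.mem_image] at hs
      obtain ⟨k, hkT, hgk⟩ := hs
      have h1 := hgood k hkT
      rw [hgk] at h1
      simp only [hT, Finset.mem_filter, Finset.mem_range] at hkT
      exact ⟨k, hkT.1, h1.symm⟩
    · rintro ⟨k, hkl, hkval⟩
      have hrn : (r:ℤ) % n = r := Int.emod_eq_of_lt (by positivity) (by exact_mod_cast hr)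
      have hkT : k ∈ T := by
        simp only [hT, Finset.mem_filter, Finset.mem_range]
        refine ⟨hkl, ?_⟩
        rw [hkval]
        rw [add_comm]
        rw [Int.add_mul_emod_self_right]
        exact hrn
      have h1 := hgood k hkT
      rw [hkval] at h1
      have h2 : ((g k : ℤ)) * n = (s:ℤ) * n := by omega
      have h3 : (g k : ℤ) = s := by
        have hn0 : (n:ℤ) ≠ 0 := by positivity
        exact mul_right_cancel₀ hn0 h2
      simp only [hS, Finset.mem_image]
      exact ⟨k, hkT, by exact_mod_cast h3⟩
  have hdc : ∀ a b : ℕ, a ≤ b → b ∈ Sset → a ∈ Sset := by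
    intro a b hab hb
    rw [hmem] at hb ⊢
    exact bead_chain hcore hn hab hb
  have hrange : Sset = Finset.range (bvec n lam ℓ r) := by
    rw [← hcard]
    exact downclosed_eq_range Sset hdc
  rw [← hmem s, hrange, Finset.mem_range]

end Abacus

section Psort

/-- The abacus gap value on runner `r`. -/
def valB (n : ℕ) (lam : ℕ → ℕ) (ℓ r : ℕ) : ℕ := bvec n lam ℓ r * n + r

lemma valB_mod {n : ℕ} (hn : 0 < n) (lam : ℕ → ℕ) (ℓ : ℕ) {r : ℕ} (hr : r < n) :
    valB n lam ℓ r % n = r := by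
  simp only [valB]
  rw [add_comm, Nat.add_mul_mod_self_right]
  exact Nat.mod_eq_of_lt hr

lemma valB_injOn {n : ℕ} (hn : 0 < n) (lam : ℕ → ℕ) (ℓ : ℕ) :
    Set.InjOn (valB n lam ℓ) (Finset.range n) := by
  intro a ha b hb hab
  simp only [Finset.coe_range, Set.mem_Iio] at ha hb
  have h1 := valB_mod hn lam ℓ ha
  have h2 := valB_mod hn lam ℓ hb
  rw [hab] at h1
  omega

lemma psort_def (n : ℕ) (lam : ℕ → ℕ) (ℓ : ℕ) :
    psort n lam ℓ = ((Finset.range n).image (valB n lam ℓ)).sort (· ≤ ·) := rfl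

lemma psort_length {n : ℕ} (hn : 0 < n) (lam : ℕ → ℕ) (ℓ : ℕ) :
    (psort n lam ℓ).length = n := by
  rw [psort_def, Finset.length_sort, Finset.card_image_of_injOn (valB_injOn hn lam ℓ),
    Finset.card_range]

lemma psort_getD_mem {n : ℕ} (hn : 0 < n) (lam : ℕ → ℕ) (ℓ : ℕ) {i : ℕ} (hi : i < n) :
    ∃ r < n, valB n lam ℓ r = (psort n lam ℓ).getD i 0 := by
  have hlen : i < (psort n lam ℓ).length := by rw [psort_length hn]; exact hi
  rw [List.getD_eq_getElem _ _ hlen]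
  have hmem : (psort n lam ℓ)[i] ∈ ((Finset.range n).image (valB n lam ℓ)).sort (· ≤ ·) := by
    rw [← psort_def]; exact List.getElem_mem hlen
  rw [Finset.mem_sort] at hmem
  simp only [Finset.mem_image, Finset.mem_range] at hmem
  obtain ⟨r, hr, hrv⟩ := hmem
  exact ⟨r, hr, hrv⟩

lemma psort_idx_of_val {n : ℕ} (hn : 0 < n) (lam : ℕ → ℕ) (ℓ : ℕ) {r : ℕ} (hr : r < n) :
    ∃ idx < n, (psort n lam ℓ).getD idx 0 = valB n lam ℓ r := by
  have hmem : valB n lam ℓ r ∈ psort n lam ℓ := by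
    rw [psort_def, Finset.mem_sort]
    simp only [Finset.mem_image, Finset.mem_range]
    exact ⟨r, hr, rfl⟩
  obtain ⟨idx, hidx, hval⟩ := List.mem_iff_getElem.mp hmem
  refine ⟨idx, by rwa [psort_length hn] at hidx, ?_⟩
  rw [List.getD_eq_getElem _ _ hidx]
  exact hval

lemma psort_strict {n : ℕ} (hn : 0 < n) (lam : ℕ → ℕ) (ℓ : ℕ) {i j : ℕ}
    (hij : i < j) (hj : j < n) :
    (psort n lam ℓ).getD i 0 < (psort n lam ℓ).getD j 0 := by
  have hlen : j < (psort n lam ℓ).length := by rw [psort_length hn]; exact hj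
  have hleni : i < (psort n lam ℓ).length := by omega
  rw [List.getD_eq_getElem _ _ hleni, List.getD_eq_getElem _ _ hlen]
  have hsorted : (psort n lam ℓ).Pairwise (· < ·) := by
    rw [psort_def]; exact List.sortedLT_iff_pairwise.mp (Finset.sortedLT_sort _)
  exact List.Pairwise.rel_get_of_lt hsorted (by simpa using hij)

end Psort

section MaxMin

variable {n : ℕ} {lam : ℕ → ℕ} {ℓ : ℕ}

lemma psort_le (hn : 0 < n) (lam : ℕ → ℕ) (ℓ : ℕ) {i j : ℕ} (hij : i ≤ j) (hj : j < n) :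
    (psort n lam ℓ).getD i 0 ≤ (psort n lam ℓ).getD j 0 := by
  rcases Nat.eq_or_lt_of_le hij with h | h
  · rw [h]
  · exact le_of_lt (psort_strict hn lam ℓ h hj)

lemma bvec_zero (hcore : IsCore n lam ℓ) (hn : 0 < n) : bvec n lam ℓ 0 = 0 := by
  by_contra h
  have h1 : 0 < bvec n lam ℓ 0 := by omega
  have h2 := (flush hcore hn hn 0).mpr h1
  obtain ⟨k, hk, hbk⟩ := h2
  have := beta_pos hcore.2.1 hk
  simp at hbk
  omega

lemma p0_eq (hcore : IsCore n lam ℓ) (hn : 0 < n) : (psort n lam ℓ).getD 0 0 = 0 := by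
  have hv : valB n lam ℓ 0 = 0 := by
    simp [valB, bvec_zero hcore hn]
  obtain ⟨idx, hidx, hval⟩ := psort_idx_of_val hn lam ℓ hn
  rw [hv] at hval
  rcases Nat.eq_zero_or_pos idx with h | h
  · rw [h] at hval; exact hval
  · have := psort_strict hn lam ℓ h hidx
    omega

lemma pmax_eq (hcore : IsCore n lam ℓ) (hn : 0 < n) (hl : 0 < ℓ) :
    ((psort n lam ℓ).getD (n-1) 0 : ℤ) = betaP lam ℓ 0 + n := by
  have hA := hcore.1
  have hpos := hcore.2.1
  set β0 : ℤ := betaP lam ℓ 0 with hβ0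
  have hβ0pos : 1 ≤ β0 := beta_pos hpos hl
  have hnz : (0:ℤ) < (n:ℤ) := by exact_mod_cast hn
  set r0 : ℕ := (β0 % n).toNat with hr0
  set s0 : ℕ := (β0 / n).toNat with hs0
  have hmod0 : 0 ≤ β0 % n := Int.emod_nonneg _ (by omega)
  have hmodlt : β0 % n < n := Int.emod_lt_of_pos _ hnz
  have hdiv0 : 0 ≤ β0 / n := Int.ediv_nonneg (by omega) (by omega)
  have hr0n : r0 < n := by omega
  have hval : ((s0:ℤ)) * n + r0 = β0 := by
    have := Int.mul_ediv_add_emod β0 n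
    have h1 : (s0:ℤ) = β0 / n := by omega
    have h2 : (r0:ℤ) = β0 % n := by omega
    rw [h1, h2]
    linarith [this]
  have hbead : Bead lam ℓ ((s0:ℤ) * n + r0) := by
    rw [hval]; exact ⟨0, hl, rfl⟩
  have hs0lt : s0 < bvec n lam ℓ r0 := (flush hcore hn hr0n s0).mp hbead
  have hble : bvec n lam ℓ r0 ≤ s0 + 1 := by
    by_contra hc
    push_neg at hc
    have hbead2 := (flush hcore hn hr0n (s0+1)).mpr (by omega)
    obtain ⟨k, hk, hbk⟩ := hbead2
    have hle := beta_le_beta0 hA (ℓ := ℓ) k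
    rw [hbk] at hle
    push_cast at hle
    nlinarith
  have hbr0 : bvec n lam ℓ r0 = s0 + 1 := by omega
  have hvmax : ((valB n lam ℓ r0 : ℕ) : ℤ) = β0 + n := by
    simp only [valB, hbr0]
    push_cast
    linarith [hval]
  -- upper bound for all runners
  have hub : ∀ r, r < n → ((valB n lam ℓ r : ℕ) : ℤ) ≤ β0 + n := by
    intro r hr
    rcases Nat.eq_zero_or_pos (bvec n lam ℓ r) with h | h
    · simp only [valB, h]
      push_cast
      omega
    · have hbead2 := (flush hcore hn hr (bvec n lam ℓ r - 1)).mpr (by omega)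
      obtain ⟨k, hk, hbk⟩ := hbead2
      have hle := beta_le_beta0 hA (ℓ := ℓ) k
      rw [hbk] at hle
      simp only [valB]
      push_cast
      push_cast at hle
      have hc : ((bvec n lam ℓ r - 1 : ℕ):ℤ) = (bvec n lam ℓ r : ℤ) - 1 := by omega
      rw [hc] at hle
      nlinarith
  obtain ⟨idx, hidx, hval2⟩ := psort_idx_of_val hn lam ℓ hr0n
  have h1 : (psort n lam ℓ).getD idx 0 ≤ (psort n lam ℓ).getD (n-1) 0 :=
    psort_le hn lam ℓ (by omega) (by omega)
  obtain ⟨r, hr, hrval⟩ := psort_getD_mem hn lam ℓ (show n-1 < n by omega)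
  have h2 : ((psort n lam ℓ).getD (n-1) 0 : ℤ) ≤ β0 + n := by
    rw [← hrval]; exact hub r hr
  rw [hval2] at h1
  have h3 : (β0 + n) ≤ ((psort n lam ℓ).getD (n-1) 0 : ℤ) := by
    rw [← hvmax]
    exact_mod_cast h1
  omega

end MaxMin

lemma div_helper {nz : ℤ} (h : 0 < nz) (a c : ℤ) (h0 : 0 ≤ c) (h1 : c < nz) :
    (a * nz + c) / nz = a ∧ (a * nz + c) % nz = c := by
  constructor
  · rw [add_comm, Int.add_mul_ediv_right c a (by omega), Int.ediv_eq_zero_of_lt h0 h1]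
    ring
  · rw [add_comm, Int.add_mul_emod_self_right, Int.emod_eq_of_lt h0 h1]

lemma res_ne {n : ℕ} (hn : 0 < n) (lam : ℕ → ℕ) (ℓ : ℕ) {i j : ℕ}
    (hi : i < n) (hj : j < n) (hij : i ≠ j) :
    ((psort n lam ℓ).getD i 0 : ℤ) % n ≠ ((psort n lam ℓ).getD j 0 : ℤ) % n := by
  obtain ⟨ri, hri, hvi⟩ := psort_getD_mem hn lam ℓ hi
  obtain ⟨rj, hrj, hvj⟩ := psort_getD_mem hn lam ℓ hj
  have hmi : ((psort n lam ℓ).getD i 0 : ℤ) % n = ri := by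
    rw [← hvi]
    rw [← Int.natCast_mod, valB_mod hn lam ℓ hri]
  have hmj : ((psort n lam ℓ).getD j 0 : ℤ) % n = rj := by
    rw [← hvj]
    rw [← Int.natCast_mod, valB_mod hn lam ℓ hrj]
  rw [hmi, hmj]
  intro hc
  have : ri = rj := by exact_mod_cast hc
  rw [this, hvj] at hvi
  rcases lt_trichotomy i j with h | h | h
  · have := psort_strict hn lam ℓ h hj; omega
  · exact hij h
  · have := psort_strict hn lam ℓ h hi; omega

/-- Part 2 main lemma: the tableau criterion is equivalent to the hook condition. -/
lemma crit_iff_hook {n m : ℕ} (hn : 2 ≤ n) (hm : 1 ≤ m) {lam : ℕ → ℕ} {ℓ : ℕ}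
    (hcore : IsCore n lam ℓ) {e : ℕ → ℕ → ℤ} (hmin : MinAlcRel n m e (kOf n lam ℓ)) :
    SepCrit m e 0 (n-2) ↔ (lam 0 : ℤ) + ℓ - 1 = n * ((m : ℤ) - 1) + 1 := by
  have hn0 : 0 < n := by omega
  have hnz : (0:ℤ) < (n:ℤ) := by exact_mod_cast hn0
  have hdom : (n-2) + 2 ≤ n := by omega
  have hidx1 : n - 2 + 1 = n - 1 := by omega
  have hematch := hmin.2.1
  rcases Nat.eq_zero_or_pos ℓ with hl | hl
  · -- ℓ = 0 : both sides false
    subst hl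
    have hlam0 : lam 0 = 0 := by
      have := hcore.2.1 0
      omega
    constructor
    · intro hcrit
      exfalso
      -- compute kOf 0 (n-2) = 0
      have hbv : ∀ r, bvec n lam 0 r = 0 := by
        intro r; simp [bvec]
      have himg : (Finset.range n).image (valB n lam 0) = Finset.range n := by
        ext a
        simp only [Finset.mem_image, Finset.mem_range]
        constructor
        · rintro ⟨r, hr, hrv⟩
          simp only [valB, hbv] at hrv
          omega
        · intro ha
          exact ⟨a, ha, by simp [valB, hbv]⟩
      have hps : psort n lam 0 = List.range n := by
        rw [psort_def, himg, Finset.sort_range]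
      have hget : ∀ i, i < n → (psort n lam 0).getD i 0 = i := by
        intro i hi
        rw [hps, List.getD_eq_getElem _ _ (by simpa using hi), List.getElem_range]
      have hk : kOf n lam 0 0 (n-2) = 0 := by
        simp only [kOf, hidx1, hget (n-1) (by omega), hget 0 hn0]
        rw [Int.ediv_eq_zero_of_lt] <;> push_cast <;> omega
      have he := hematch 0 (n-2) (Nat.zero_le _) hdom
      rw [hk] at he
      have := hcrit.1
      omega
    · intro hrhs
      exfalso
      have hp : 0 ≤ (n:ℤ) * ((m:ℤ) - 1) := by
        apply mul_nonneg (by omega)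
        have : (1:ℤ) ≤ m := by exact_mod_cast hm
        omega
      push_cast at hrhs
      omega
  · -- ℓ ≥ 1
    have hb0 : betaP lam ℓ 0 = (lam 0 : ℤ) + ℓ - 1 := by
      simp [betaP]
    have hp0 : (psort n lam ℓ).getD 0 0 = 0 := p0_eq hcore hn0
    have hpmax : ((psort n lam ℓ).getD (n-1) 0 : ℤ) = betaP lam ℓ 0 + n :=
      pmax_eq hcore hn0 hl
    set pI : ℕ → ℤ := fun i => ((psort n lam ℓ).getD i 0 : ℤ) with hpI
    have hkval : ∀ i j : ℕ, kOf n lam ℓ i j = (pI (j+1) - pI i) / n := fun i j => rfl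
    have hK : kOf n lam ℓ 0 (n-2) = pI (n-1) / n := by
      rw [hkval, hidx1]
      simp only [hpI, hp0]
      push_cast
      ring_nf
    have hp00 : pI 0 = 0 := by simp only [hpI, hp0]; norm_num
    have hrhs_iff : ((lam 0 : ℤ) + ℓ - 1 = n * ((m:ℤ) - 1) + 1) ↔ pI (n-1) = n * m + 1 := by
      constructor
      · intro h
        simp only [hpI]
        rw [hpmax, hb0]
        linarith
      · intro h
        simp only [hpI] at h
        rw [hpmax, hb0] at h
        linarith
    rw [hrhs_iff]
    constructor
    · -- SepCrit → pI (n-1) = n*m+1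
      rintro ⟨hcm, hsum⟩
      -- K ≥ m
      have heK := hematch 0 (n-2) (Nat.zero_le _) hdom
      rw [hcm] at heK
      have hKm : (m:ℤ) ≤ kOf n lam ℓ 0 (n-2) := by omega
      -- K = m
      have hKeq : kOf n lam ℓ 0 (n-2) = m := by
        rcases Nat.lt_or_ge n 3 with h3 | h3
        · -- n = 2 : use minimality
          have hn2 : n = 2 := by omega
          have hk' : ∀ i j : ℕ, i ≤ j → j + 2 ≤ n → min ((m:ℤ)) (m:ℤ) = e i j := by
            intro i j hij hjn
            have hi0 : i = 0 := by omega
            have hj0 : j = 0 := by omega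
            subst hi0; subst hj0
            have h00 : e 0 0 = (m:ℤ) := by
              have h := hcm
              rw [show n-2 = 0 from by omega] at h
              exact h
            rw [min_self, h00]
          have hdomk' : DomAlcoveCoords n (fun _ _ => (m:ℤ)) := by
            constructor
            · intro i j _ _; positivity
            · intro i t j hit htj hjn
              omega
          have hle : kOf n lam ℓ 0 (n-2) ≤ (m:ℤ) :=
            hmin.2.2 (fun _ _ => (m:ℤ)) hdomk' (fun i j hij hjn => hk' i j hij hjn)
              0 (n-2) (Nat.zero_le _) hdom
          omega
        · -- n ≥ 3 : use the alcove inequality at t = 0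
          have hs0 := hsum 0 (le_refl _) (by omega)
          have he1 := hematch 0 0 (le_refl _) (by omega)
          have he2 := hematch 1 (n-2) (by omega) hdom
          have hnn1 := hmin.1.1 0 0 (le_refl _) (by omega)
          have hnn2 := hmin.1.1 1 (n-2) (by omega) hdom
          have halc := hmin.1.2 0 0 (n-2) (le_refl _) (by omega) hdom
          norm_num at halc hs0
          omega
      -- residue of pI (n-1)
      set c : ℤ := pI (n-1) % n with hc
      have hc0 : 0 ≤ c := Int.emod_nonneg _ (by omega)
      have hcn : c < n := Int.emod_lt_of_pos _ hnz
      have hdecomp : pI (n-1) = (m:ℤ) * n + c := by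
        have h1 := Int.mul_ediv_add_emod (pI (n-1)) n
        rw [← hK] at h1
        rw [hKeq] at h1
        linarith
      have hcne0 : c ≠ 0 := by
        have := res_ne hn0 lam ℓ (show n-1 < n by omega) (show 0 < n by omega) (by omega)
        simp only [hp0] at this
        simpa [hpI, hc] using this
      -- show c = 1
      have hc1 : c = 1 := by
        by_contra hcne1
        have hc2 : 2 ≤ c := by omega
        -- n ≥ 3 since c < n and c ≥ 2
        have hn3 : 3 ≤ n := by
          have : (2:ℤ) < n := by omega
          exact_mod_cast by omega
        -- find the entry with residue 1
        obtain ⟨idx, hidxn, hidxv⟩ := psort_idx_of_val hn0 lam ℓ (show 1 < n by omega)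
        have hres1 : pI idx % n = 1 := by
          simp only [hpI]
          rw [hidxv, ← Int.natCast_mod, valB_mod hn0 lam ℓ (by omega)]
          simp
        have hidxne0 : idx ≠ 0 := by
          intro h
          rw [h] at hres1
          simp only [hpI, hp0] at hres1
          simp at hres1
        have hidxnen1 : idx ≠ n-1 := by
          intro h
          rw [h] at hres1
          rw [← hc] at hres1
          omega
        set t : ℕ := idx - 1 with ht
        have htlt : t < n - 2 := by omega
        have ht1 : t + 1 = idx := by omega
        set q : ℤ := pI idx with hq
        have hq0 : 0 < q := by
          have := psort_strict hn0 lam ℓ (show 0 < idx by omega) hidxn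
          simp only [hpI, hq, hp0]
          omega
        set a : ℤ := q / n with ha
        have hqd : q = a * n + 1 := by
          have h1 := Int.mul_ediv_add_emod q n
          rw [← hres1]
          simp only [hq] at *
          linarith [h1]
        have ha0 : 0 ≤ a := Int.ediv_nonneg (by omega) (by omega)
        have hqlt : q < pI (n-1) := by
          have := psort_strict hn0 lam ℓ (show idx < n-1 by omega) (by omega)
          simp only [hpI, hq]
          exact_mod_cast this
        have ham : a ≤ m := by
          by_contra hcon
          push_neg at hcon
          have h1 : ((m:ℤ)+1) * n ≤ a * n := mul_le_mul_of_nonneg_right (by omega) (by omega)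
          rw [hdecomp, hqd] at hqlt
          linarith
        -- compute the two k-values
        have hk1 : kOf n lam ℓ 0 t = a := by
          rw [hkval, ht1, ← hq, hp00, sub_zero, hqd]
          exact (div_helper hnz a 1 (by omega) (by omega)).1
        have hk2 : kOf n lam ℓ (t+1) (n-2) = (m:ℤ) - a := by
          rw [hkval, hidx1, ht1, ← hq]
          rw [show pI (n-1) - q = ((m:ℤ) - a) * n + (c - 1) by rw [hdecomp, hqd]; ring]
          exact (div_helper hnz _ _ (by omega) (by omega)).1
        have he1 := hematch 0 t (Nat.zero_le _) (by omega)
        have he2 := hematch (t+1) (n-2) (by omega) hdom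
        rw [hk1] at he1
        rw [hk2] at he2
        have := hsum t (Nat.zero_le _) htlt
        omega
      rw [hdecomp, hc1]; ring
    · -- pI (n-1) = n*m+1 → SepCrit
      intro hmax
      have hKeq : kOf n lam ℓ 0 (n-2) = m := by
        rw [hK, hmax]
        have : (n:ℤ) * m + 1 = (m:ℤ) * n + 1 := by ring
        rw [this]
        exact (div_helper hnz (m:ℤ) 1 (by omega) (by omega)).1
      constructor
      · have := hematch 0 (n-2) (Nat.zero_le _) hdom
        rw [hKeq] at this
        omega
      · intro t _ htv
        set q : ℤ := pI (t+1) with hq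
        have ht1n : t + 1 < n - 1 := by omega
        have hq0 : 0 < q := by
          have := psort_strict hn0 lam ℓ (show 0 < t+1 by omega) (by omega)
          simp only [hpI, hq, hp0]
          omega
        have hqlt : q < (n:ℤ) * m + 1 := by
          have := psort_strict hn0 lam ℓ ht1n (by omega)
          have h2 : q < pI (n-1) := by simp only [hpI, hq]; exact_mod_cast this
          rw [hmax] at h2
          exact h2
        set cq : ℤ := q % n with hcq
        set a : ℤ := q / n with ha
        have hcq0 : 0 ≤ cq := Int.emod_nonneg _ (by omega)
        have hcqn : cq < n := Int.emod_lt_of_pos _ hnz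
        have hqd : q = a * n + cq := by
          have h1 := Int.mul_ediv_add_emod q n
          simp only [ha, hcq]
          linarith [h1]
        have ha0 : 0 ≤ a := Int.ediv_nonneg (by omega) (by omega)
        have hcqne0 : cq ≠ 0 := by
          have := res_ne hn0 lam ℓ (show t+1 < n by omega) hn0 (by omega)
          simp only [hp0] at this
          simpa [hpI, hq, hcq] using this
        have hcqne1 : cq ≠ 1 := by
          have := res_ne hn0 lam ℓ (show t+1 < n by omega) (show n-1 < n by omega) (by omega)
          have hres : pI (n-1) % n = 1 := by
            rw [hmax]
            have : (n:ℤ) * m + 1 = (m:ℤ) * n + 1 := by ring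
            rw [this]
            exact (div_helper hnz (m:ℤ) 1 (by omega) (by omega)).2
          simp only [hpI] at this hres
          simp only [hcq, hq, hpI]
          rw [hres] at this
          exact this
        have hcq2 : 2 ≤ cq := by omega
        have ham : a ≤ (m:ℤ) - 1 := by
          by_contra hcon
          push_neg at hcon
          have h1 : (m:ℤ) * n ≤ a * n := mul_le_mul_of_nonneg_right (by omega) (by omega)
          rw [hqd] at hqlt
          linarith
        have hk1 : kOf n lam ℓ 0 t = a := by
          rw [hkval, ← hq, hp00, sub_zero, hqd]
          exact (div_helper hnz a cq (by omega) (by omega)).1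
        have hk2 : kOf n lam ℓ (t+1) (n-2) = (m:ℤ) - a - 1 := by
          rw [hkval, hidx1, ← hq]
          rw [show pI (n-1) - q = ((m:ℤ) - a - 1) * n + ((n:ℤ) + 1 - cq) by rw [hmax, hqd]; ring]
          exact (div_helper hnz _ _ (by omega) (by omega)).1
        have he1 := hematch 0 t (Nat.zero_le _) (by omega)
        have he2 := hematch (t+1) (n-2) (by omega) hdom
        rw [hk1] at he1
        rw [hk2] at he2
        omega

/-- `H_{θ,m}` is a separating wall for a dominant `m`-Shi region `R` iff the
`n`-core `λ` with `Ψ(λ)` the `m`-minimal alcove of `R` satisfies `h_{11} = n(m-1)+1`. -/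
theorem theta_sepwall_iff_hook (n m : ℕ) (hn : 2 ≤ n) (hm : 1 ≤ m)
    (lam : ℕ → ℕ) (ℓ : ℕ) (hcore : IsCore n lam ℓ)
    (x : ℕ → ℝ) (e : ℕ → ℕ → ℤ) (hx : RegionPoint n m x) (he : TabOf n m x e)
    (hmin : MinAlcRel n m e (kOf n lam ℓ)) :
    SepWall n m x 0 (n - 2) ↔ (lam 0 : ℤ) + ℓ - 1 = n * ((m : ℤ) - 1) + 1 := by
  constructor
  · intro h
    exact (crit_iff_hook hn hm hcore hmin).mp (sep_to_crit n m hn hm x e hx he h)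
  · intro h
    exact crit_to_sep n m hn hm x e hx he ((crit_iff_hook hn hm hcore hmin).mpr h)

end Shi
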